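/- Let d_1 < d_2 < … < d_n be real numbers with |d_i| ≤ d for all i, and let d_min = min over i ≠ j of |d_i − d_j|. Then the inverse of the n×n Vandermonde matrix V with entries V(i,j) = d_j^(i-1) satisfies ‖V⁻¹‖_∞ ≤ (1+d)^(n-1) / (ζ(n) · d_min^(n-1)), where ζ(n) = (n/2)! · ((n-2)/2)! if n is even and ζ(n) = (((n-1)/2)!)^2 if n is odd. -/

import Mathlib

open Matrix

attribute [local instance] Matrix.linftyOpNormedAddCommGroup

open Polynomial Finset

/-- Sum of absolute coefficients of `∏ (X - C (r k))` is at most `∏ (1 + |r k|)`. -/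
lemma sumAbsCoeff_le {ι : Type*} [DecidableEq ι] (s : Finset ι) (r : ι → ℝ) :
    ∀ N : ℕ, ∑ i ∈ Finset.range N, |(∏ k ∈ s, (X - C (r k))).coeff i| ≤
      ∏ k ∈ s, (1 + |r k|) := by
  induction s using Finset.induction with
  | empty =>
    intro N
    simp only [Finset.prod_empty]
    calc ∑ i ∈ Finset.range N, |(1 : ℝ[X]).coeff i|
        = ∑ i ∈ Finset.range N, if i = 0 then (1:ℝ) else 0 := by
          apply Finset.sum_congr rfl; intro i _
          simp [Polynomial.coeff_one]
          split_ifs <;> simp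
      _ = if 0 ∈ Finset.range N then (1:ℝ) else 0 := by
          rw [Finset.sum_ite_eq' (Finset.range N) 0 (fun _ => (1:ℝ))]
      _ ≤ 1 := by split_ifs <;> norm_num
  | @insert a s ha ih =>
    intro N
    have hPnn : 0 ≤ ∏ k ∈ s, (1 + |r k|) :=
      Finset.prod_nonneg fun k _ => by positivity
    rw [Finset.prod_insert ha, Finset.prod_insert ha]
    cases N with
    | zero => simp; positivity
    | succ M =>
      set p : ℝ[X] := ∏ k ∈ s, (X - C (r k)) with hp
      have hq : (X - C (r a)) * p = p * (X - C (r a)) := mul_comm _ _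
      rw [hq, Finset.sum_range_succ']
      have hc0 : (p * (X - C (r a))).coeff 0 = p.coeff 0 * (-(r a)) := by
        rw [Polynomial.mul_coeff_zero]; simp
      calc (∑ i ∈ Finset.range M, |(p * (X - C (r a))).coeff (i + 1)|) +
              |(p * (X - C (r a))).coeff 0|
          ≤ (∑ i ∈ Finset.range M, (|p.coeff i| + |r a| * |p.coeff (i + 1)|)) +
              |r a| * |p.coeff 0| := by
            apply add_le_add
            · apply Finset.sum_le_sum; intro i _
              rw [Polynomial.coeff_mul_X_sub_C]
              calc |p.coeff i - p.coeff (i+1) * r a| ≤ |p.coeff i| + |p.coeff (i+1) * r a| :=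
                    abs_sub _ _
                _ = |p.coeff i| + |r a| * |p.coeff (i+1)| := by rw [abs_mul]; ring
            · exact le_of_eq (by rw [hc0, abs_mul, abs_neg]; ring)
        _ = (∑ i ∈ Finset.range M, |p.coeff i|) +
              |r a| * ((∑ i ∈ Finset.range M, |p.coeff (i + 1)|) + |p.coeff 0|) := by
            rw [Finset.sum_add_distrib, mul_add, Finset.mul_sum]; ring
        _ = (∑ i ∈ Finset.range M, |p.coeff i|) +
              |r a| * ∑ i ∈ Finset.range (M + 1), |p.coeff i| := by
            rw [Finset.sum_range_succ']
        _ ≤ (∏ k ∈ s, (1 + |r k|)) + |r a| * ∏ k ∈ s, (1 + |r k|) := by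
            apply add_le_add (ih M)
            exact mul_le_mul_of_nonneg_left (ih (M + 1)) (abs_nonneg _)
        _ = (1 + |r a|) * ∏ k ∈ s, (1 + |r k|) := by ring

/-- minimum of `a! * b!` over `a + b = N`. -/
lemma factorial_mul_factorial_ge (N a b : ℕ) (h : a + b = N) :
    Nat.factorial (N / 2) * Nat.factorial (N - N / 2) ≤
      Nat.factorial a * Nat.factorial b := by
  have ha : a ≤ N := by omega
  have hb : b = N - a := by omega
  subst hb
  have h1 : Nat.choose N a ≤ Nat.choose N (N / 2) := Nat.choose_le_middle a N
  have h2 := Nat.choose_mul_factorial_mul_factorial ha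
  have h3 := Nat.choose_mul_factorial_mul_factorial (Nat.div_le_self N 2)
  have hpos : 0 < Nat.choose N a := Nat.choose_pos ha
  apply Nat.le_of_mul_le_mul_left _ hpos
  calc Nat.choose N a * (Nat.factorial (N / 2) * Nat.factorial (N - N / 2))
      ≤ Nat.choose N (N / 2) * (Nat.factorial (N / 2) * Nat.factorial (N - N / 2)) :=
        Nat.mul_le_mul_right _ h1
    _ = Nat.factorial N := by rw [← h3]; ring
    _ = Nat.choose N a * (Nat.factorial a * Nat.factorial (N - a)) := by rw [← h2]; ring

lemma paperZeta_eq (n : ℕ) (hn : 1 ≤ n) :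
    (if Even n then (Nat.factorial (n / 2) : ℝ) * (Nat.factorial ((n - 2) / 2) : ℝ)
      else ((Nat.factorial ((n - 1) / 2) : ℝ)) ^ 2) =
    (Nat.factorial ((n - 1) / 2) : ℝ) * (Nat.factorial ((n - 1) - (n - 1) / 2) : ℝ) := by
  split_ifs with h
  · obtain ⟨t, ht⟩ := h
    have e1 : (n - 1) / 2 = (n - 2) / 2 := by omega
    have e2 : (n - 1) - (n - 1) / 2 = n / 2 := by omega
    rw [e2, e1]; ring
  · have h1 : n % 2 = 1 := Nat.odd_iff.mp (Nat.not_even_iff_odd.mp h)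
    have e2 : (n - 1) - (n - 1) / 2 = (n - 1) / 2 := by omega
    rw [e2]; ring

/-- ζ(n) = (n/2)!·((n-2)/2)! for even n and (((n-1)/2)!)² for odd n. -/
noncomputable def paperZeta (n : ℕ) : ℝ :=
  if Even n then (Nat.factorial (n / 2) : ℝ) * (Nat.factorial ((n - 2) / 2) : ℝ)
  else ((Nat.factorial ((n - 1) / 2) : ℝ)) ^ 2

/-- For ordered nodes `d_1 < ... < d_n` in `[-d, d]` with minimal gap `dmin`, the ℓ∞ operator
norm of the inverse Vandermonde matrix is at most `(1+d)^(n-1) / (ζ(n) · dmin^(n-1))`. -/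
theorem stmt_5 (n : ℕ) (hn : 0 < n) (dd : Fin n → ℝ) (hmono : StrictMono dd) (d : ℝ)
    (hbound : ∀ i, |dd i| ≤ d) (dmin : ℝ)
    (hdmin : IsLeast {x : ℝ | ∃ i j : Fin n, i ≠ j ∧ x = |dd i - dd j|} dmin) :
    ‖(Matrix.of fun i j : Fin n => dd j ^ (i : ℕ))⁻¹‖ ≤
      (1 + d) ^ (n - 1) / (paperZeta n * dmin ^ (n - 1)) := by
  obtain ⟨i0, j0, hne0, heq0⟩ := hdmin.1
  have hlow : ∀ i j : Fin n, i ≠ j → dmin ≤ |dd i - dd j| := by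
    intro i j hij
    exact hdmin.2 ⟨i, j, hij, rfl⟩
  have hdminpos : 0 < dmin := by
    rw [heq0]
    have : dd i0 ≠ dd j0 := hmono.injective.ne hne0
    exact abs_pos.mpr (sub_ne_zero.mpr this)
  have hd0 : 0 ≤ d := le_trans (abs_nonneg _) (hbound i0)
  -- gap lemma
  have gap : ∀ m : ℕ, ∀ a b : Fin n, (b : ℕ) = (a : ℕ) + m → (m : ℝ) * dmin ≤ dd b - dd a := by
    intro m
    induction m with
    | zero =>
      intro a b hb
      have : a = b := Fin.ext (by omega)
      subst this; simp
    | succ m ih =>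
      intro a b hb
      have hm : (a : ℕ) + m < n := by have := b.isLt; omega
      set b' : Fin n := ⟨(a : ℕ) + m, hm⟩ with hb'
      have h1 : (m : ℝ) * dmin ≤ dd b' - dd a := ih a b' rfl
      have hne : b' ≠ b := by
        apply Fin.ne_of_val_ne; simp [hb']; omega
      have hlt : dd b' < dd b := hmono (by rw [Fin.lt_def]; simp [hb']; omega)
      have h2 : dmin ≤ dd b - dd b' := by
        have := hlow b' b hne
        rwa [abs_sub_comm, abs_of_pos (sub_pos.mpr hlt)] at this
      push_cast
      linarith
  -- distance-type bound per pair
  have pairbd : ∀ j k : Fin n, j ≠ k →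
      ((((j : ℕ) - (k : ℕ)) + ((k : ℕ) - (j : ℕ)) : ℕ) : ℝ) * dmin ≤ |dd j - dd k| := by
    intro j k hjk
    rcases lt_or_gt_of_ne (Fin.val_ne_of_ne hjk) with h | h
    · -- j < k
      have := gap ((k : ℕ) - (j : ℕ)) j k (by omega)
      have e : ((j : ℕ) - (k : ℕ)) + ((k : ℕ) - (j : ℕ)) = (k : ℕ) - (j : ℕ) := by omega
      rw [e, abs_sub_comm]
      exact le_trans this (le_abs_self _)
    · have := gap ((j : ℕ) - (k : ℕ)) k j (by omega)
      have e : ((j : ℕ) - (k : ℕ)) + ((k : ℕ) - (j : ℕ)) = (j : ℕ) - (k : ℕ) := by omega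
      rw [e]
      exact le_trans this (le_abs_self _)
  -- the nat product of distances over erase j
  have natprod : ∀ j : Fin n,
      (∏ k ∈ Finset.univ.erase j, ((((j : ℕ) - (k : ℕ)) + ((k : ℕ) - (j : ℕ))) : ℕ))
        = Nat.factorial (j : ℕ) * Nat.factorial (n - 1 - (j : ℕ)) := by
    intro j
    have step1 : (∏ k ∈ Finset.univ.erase j, ((((j : ℕ) - (k : ℕ)) + ((k : ℕ) - (j : ℕ))) : ℕ))
        = ∏ v ∈ (Finset.range n).erase (j : ℕ), (((j : ℕ) - v) + (v - (j : ℕ))) := by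
      refine Finset.prod_nbij (fun k => (k : ℕ)) ?_ ?_ ?_ ?_
      · intro k hk
        have hk' : k ≠ j := by simpa using hk
        simp only [Finset.mem_erase, Finset.mem_range]
        exact ⟨Fin.val_ne_of_ne hk', k.isLt⟩
      · intro x _ y _ hxy
        exact Fin.ext hxy
      · intro v hv
        simp only [Finset.mem_coe, Finset.mem_erase, Finset.mem_range] at hv
        refine ⟨⟨v, hv.2⟩, ?_, rfl⟩
        simp only [Finset.mem_coe, Finset.mem_erase, Finset.mem_univ, and_true]
        exact fun hc => hv.1 (congrArg Fin.val hc)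
      · intro k _; rfl
    rw [step1]
    have hsplit : (Finset.range n).erase (j : ℕ)
        = Finset.range (j : ℕ) ∪ Finset.Ico ((j : ℕ) + 1) n := by
      ext v
      simp only [Finset.mem_erase, Finset.mem_range, Finset.mem_union, Finset.mem_Ico]
      have := j.isLt
      omega
    have hdisj : Disjoint (Finset.range (j : ℕ)) (Finset.Ico ((j : ℕ) + 1) n) := by
      rw [Finset.disjoint_left]
      intro v hv hv'
      simp only [Finset.mem_range] at hv
      simp only [Finset.mem_Ico] at hv'
      omega
    rw [hsplit, Finset.prod_union hdisj]
    have h1 : (∏ v ∈ Finset.range (j : ℕ), (((j : ℕ) - v) + (v - (j : ℕ))))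
        = Nat.factorial (j : ℕ) := by
      rw [← Finset.prod_range_reflect]
      rw [← Finset.prod_range_add_one_eq_factorial]
      apply Finset.prod_congr rfl
      intro v hv
      simp only [Finset.mem_range] at hv
      omega
    have h2 : (∏ v ∈ Finset.Ico ((j : ℕ) + 1) n, (((j : ℕ) - v) + (v - (j : ℕ))))
        = Nat.factorial (n - 1 - (j : ℕ)) := by
      rw [Finset.prod_Ico_eq_prod_range]
      have e : n - ((j : ℕ) + 1) = n - 1 - (j : ℕ) := by omega
      rw [e, ← Finset.prod_range_add_one_eq_factorial]
      apply Finset.prod_congr rfl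
      intro v hv
      simp only [Finset.mem_range] at hv
      omega
    rw [h1, h2]
  -- cardinality of erased set
  have hcard : ∀ j : Fin n, (Finset.univ.erase j).card = n - 1 := by
    intro j
    rw [Finset.card_erase_of_mem (Finset.mem_univ j), Finset.card_univ, Fintype.card_fin]
  -- zeta is at most j! * (n-1-j)!
  have hzeta : paperZeta n = (Nat.factorial ((n - 1) / 2) : ℝ) *
      (Nat.factorial ((n - 1) - (n - 1) / 2) : ℝ) := by
    rw [paperZeta]; exact paperZeta_eq n hn
  have hzpos : 0 < paperZeta n := by
    rw [hzeta]
    positivity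
  have hzle : ∀ j : Fin n, paperZeta n ≤
      (Nat.factorial (j : ℕ) : ℝ) * (Nat.factorial (n - 1 - (j : ℕ)) : ℝ) := by
    intro j
    rw [hzeta]
    have := factorial_mul_factorial_ge (n - 1) (j : ℕ) (n - 1 - (j : ℕ))
      (by have := j.isLt; omega)
    exact_mod_cast this
  -- product lower bound
  have hprodlow : ∀ j : Fin n,
      paperZeta n * dmin ^ (n - 1) ≤ ∏ k ∈ Finset.univ.erase j, |dd j - dd k| := by
    intro j
    have step : ∏ k ∈ Finset.univ.erase j,
        (((((j : ℕ) - (k : ℕ)) + ((k : ℕ) - (j : ℕ)) : ℕ) : ℝ) * dmin)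
        ≤ ∏ k ∈ Finset.univ.erase j, |dd j - dd k| := by
      apply Finset.prod_le_prod
      · intro k _
        exact mul_nonneg (Nat.cast_nonneg _) hdminpos.le
      · intro k hk
        have hk' : k ≠ j := by simpa using hk
        exact pairbd j k (Ne.symm hk')
    refine le_trans ?_ step
    rw [Finset.prod_mul_distrib, Finset.prod_const, hcard j]
    apply mul_le_mul_of_nonneg_right _ (pow_nonneg hdminpos.le _)
    have hfc : ∏ k ∈ Finset.univ.erase j,
        ((((j : ℕ) - (k : ℕ)) + ((k : ℕ) - (j : ℕ)) : ℕ) : ℝ)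
        = (Nat.factorial (j : ℕ) : ℝ) * (Nat.factorial (n - 1 - (j : ℕ)) : ℝ) := by
      rw [← Nat.cast_prod, natprod j, Nat.cast_mul]
    rw [hfc]
    exact hzle j
  -- the candidate inverse matrix
  set V : Matrix (Fin n) (Fin n) ℝ := Matrix.of fun i j : Fin n => dd j ^ (i : ℕ) with hV
  set c : Fin n → ℝ := fun j => (∏ k ∈ Finset.univ.erase j, (dd j - dd k))⁻¹ with hc
  set w : Fin n → ℝ[X] := fun j => ∏ k ∈ Finset.univ.erase j, (X - C (dd k)) with hw
  set W : Matrix (Fin n) (Fin n) ℝ :=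
    Matrix.of (fun j i : Fin n => (C (c j) * w j).coeff (i : ℕ)) with hW
  have hprodne : ∀ j : Fin n, (∏ k ∈ Finset.univ.erase j, (dd j - dd k)) ≠ 0 := by
    intro j
    rw [Finset.prod_ne_zero_iff]
    intro k hk
    have hk' : k ≠ j := by simpa using hk
    exact sub_ne_zero.mpr (hmono.injective.ne (Ne.symm hk'))
  have hdeg : ∀ j : Fin n, (C (c j) * w j).natDegree < n := by
    intro j
    apply lt_of_le_of_lt (Polynomial.natDegree_C_mul_le _ _)
    apply lt_of_le_of_lt (Polynomial.natDegree_prod_le _ _)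
    calc ∑ k ∈ Finset.univ.erase j, (X - C (dd k)).natDegree
        = ∑ k ∈ Finset.univ.erase j, 1 := by
          apply Finset.sum_congr rfl
          intro k _
          rw [Polynomial.natDegree_X_sub_C]
      _ = n - 1 := by rw [Finset.sum_const, smul_eq_mul, mul_one, hcard j]
      _ < n := by omega
  have hWV : W * V = 1 := by
    ext j m
    rw [Matrix.mul_apply, Matrix.one_apply]
    have hsum : ∑ k : Fin n, W j k * V k m = Polynomial.eval (dd m) (C (c j) * w j) := by
      rw [Polynomial.eval_eq_sum_range' (hdeg j) (dd m),
        ← Fin.sum_univ_eq_sum_range (fun i => (C (c j) * w j).coeff i * dd m ^ i) n]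
      apply Finset.sum_congr rfl
      intro k _
      simp [hW, hV]
    rw [hsum, Polynomial.eval_mul, Polynomial.eval_C]
    have hwev : Polynomial.eval (dd m) (w j) = ∏ k ∈ Finset.univ.erase j, (dd m - dd k) := by
      rw [hw]
      simp [Polynomial.eval_prod]
    by_cases hjm : j = m
    · subst hjm
      rw [if_pos rfl, hwev, hc]
      exact inv_mul_cancel₀ (hprodne j)
    · rw [if_neg hjm, hwev]
      have hm : m ∈ Finset.univ.erase j := by
        simp only [Finset.mem_erase, Finset.mem_univ, and_true]
        exact fun h => hjm h.symm
      rw [Finset.prod_eq_zero hm (sub_self (dd m)), mul_zero]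
  have hVinv : V⁻¹ = W := Matrix.inv_eq_left_inv hWV
  have hBden : 0 < paperZeta n * dmin ^ (n - 1) := by positivity
  have key : ∀ j : Fin n, ∑ i : Fin n, ‖W j i‖ ≤
      (1 + d) ^ (n - 1) / (paperZeta n * dmin ^ (n - 1)) := by
    intro j
    have e1 : ∑ i : Fin n, ‖W j i‖ = ∑ i ∈ Finset.range n, |(C (c j) * w j).coeff i| := by
      rw [← Fin.sum_univ_eq_sum_range (fun i => |(C (c j) * w j).coeff i|) n]
      apply Finset.sum_congr rfl
      intro i _
      simp [hW, Real.norm_eq_abs, abs_mul]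
    have e2 : ∀ i : ℕ, |(C (c j) * w j).coeff i| = |c j| * |(w j).coeff i| := by
      intro i
      rw [Polynomial.coeff_C_mul, abs_mul]
    rw [e1]
    simp_rw [e2]
    rw [← Finset.mul_sum]
    have h3 : ∑ i ∈ Finset.range n, |(w j).coeff i| ≤
        ∏ k ∈ Finset.univ.erase j, (1 + |dd k|) := by
      rw [hw]
      exact sumAbsCoeff_le _ _ n
    have h4 : ∏ k ∈ Finset.univ.erase j, (1 + |dd k|) ≤ (1 + d) ^ (n - 1) := by
      calc ∏ k ∈ Finset.univ.erase j, (1 + |dd k|)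
          ≤ ∏ _k ∈ Finset.univ.erase j, (1 + d) :=
            Finset.prod_le_prod (fun k _ => by positivity)
              (fun k _ => by linarith [hbound k])
        _ = (1 + d) ^ (n - 1) := by rw [Finset.prod_const, hcard j]
    have h5 : |c j| ≤ (paperZeta n * dmin ^ (n - 1))⁻¹ := by
      have habs : |c j| = (∏ k ∈ Finset.univ.erase j, |dd j - dd k|)⁻¹ := by
        rw [hc]
        simp [abs_inv, Finset.abs_prod]
      rw [habs]
      exact inv_anti₀ hBden (hprodlow j)
    calc |c j| * ∑ i ∈ Finset.range n, |(w j).coeff i|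
        ≤ |c j| * (1 + d) ^ (n - 1) :=
          mul_le_mul_of_nonneg_left (le_trans h3 h4) (abs_nonneg _)
      _ ≤ (paperZeta n * dmin ^ (n - 1))⁻¹ * (1 + d) ^ (n - 1) :=
          mul_le_mul_of_nonneg_right h5 (by positivity)
      _ = (1 + d) ^ (n - 1) / (paperZeta n * dmin ^ (n - 1)) := by
          rw [div_eq_mul_inv, mul_comm]
  rw [hVinv]
  have hBnn : (0:ℝ) ≤ (1 + d) ^ (n - 1) / (paperZeta n * dmin ^ (n - 1)) :=
    div_nonneg (by positivity) hBden.le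
  have hnn : ‖W‖₊ ≤ ⟨_, hBnn⟩ := by
    rw [Matrix.linfty_opNNNorm_def]
    apply Finset.sup_le
    intro j _
    refine NNReal.coe_le_coe.mp ?_
    calc ((∑ i : Fin n, ‖W j i‖₊ : NNReal) : ℝ) = ∑ i : Fin n, ‖W j i‖ := by
          push_cast
          rfl
      _ ≤ _ := key j
  exact_mod_cast hnn
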